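/- Let X be a uniformly discrete δ-hyperbolic graph of bounded geometry with basepoint e, p ≥ 1, and let f be a concave non-decreasing function with property (C_p). Define φ(x) = ∑_{n≥1} (f(2^n)/2^{n/p}) H(x,2^n), where H(x,m) is the normalized trumpet function. Then φ is Lipschitz: there is a constant L with ‖φ(x)-φ(y)‖_p ≤ L·d(x,y) + L for all x,y ∈ X. -/

import Mathlib

/-- A discrete geodesic of length `L` from `a` to `b`, parametrized by arclength. -/
def IsDGeodesic {X : Type*} [MetricSpace X] (γ : ℕ → X) (a b : X) (L : ℕ) : Prop :=
  (L : ℝ) = dist a b ∧ γ 0 = a ∧ γ L = b ∧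
    ∀ s ≤ L, ∀ t ≤ L, dist (γ s) (γ t) = |(s : ℝ) - (t : ℝ)|

/-- The Rips thin-triangles condition with constant `δ` for discrete geodesics. -/
def DRipsHyperbolic (X : Type*) [MetricSpace X] (δ : ℝ) : Prop :=
  ∀ (a b c : X) (γ₁ γ₂ γ₃ : ℕ → X) (L₁ L₂ L₃ : ℕ),
    IsDGeodesic γ₁ a b L₁ → IsDGeodesic γ₂ b c L₂ → IsDGeodesic γ₃ a c L₃ →
      ∀ s ≤ L₁, ∃ u : X, ((∃ t ≤ L₂, γ₂ t = u) ∨ (∃ t ≤ L₃, γ₃ t = u)) ∧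
        dist (γ₁ s) u ≤ δ

/-- The trumpet set `F_{x,k,n}`: points lying on a segment `g([n,2n])` of some geodesic
`g` from a point `y` with `d(x,y) ≤ k` to the basepoint `e`, excluding `B(e; 3δ)`. -/
def trumpetSet {X : Type*} [MetricSpace X] (e : X) (δ : ℝ) (x : X) (k n : ℕ) : Set X :=
  {z : X | 3 * δ ≤ dist e z ∧
    ∃ (y : X) (γ : ℕ → X) (L t : ℕ), dist x y ≤ (k : ℝ) ∧ IsDGeodesic γ y e L ∧
      t ≤ L ∧ n ≤ t ∧ t ≤ 2 * n ∧ γ t = z}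

/-- The averaged trumpet function `H(x,n) = (1/n) ∑_{k ≤ n/4} F(x,k,n)`. -/
noncomputable def trumpetAvg {X : Type*} [MetricSpace X] (e : X) (δ : ℝ) (x : X) (n : ℕ) :
    X → ℝ :=
  fun z => (1 / (n : ℝ)) *
    ∑ k ∈ Finset.range (n / 4 + 1), Set.indicator (trumpetSet e δ x k n) (fun _ => 1) z

/-- The embedding `φ(x) = ∑_{n ≥ 1} (f(2^n)/2^{n/p}) H(x, 2^n)` of Theorem 3.2, as an
element of `⨁_n ℓ^p(X)` recorded coordinatewise. -/
noncomputable def trumpetEmbedding {X : Type*} [MetricSpace X] (e : X) (δ : ℝ) (p : ℝ)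
    (f : ℕ → ℝ) (x : X) : ℕ → X → ℝ :=
  fun m z =>
    (f (2 ^ (m + 1)) / ((2 : ℝ) ^ (m + 1)) ^ (1 / p)) * trumpetAvg e δ x (2 ^ (m + 1)) z

lemma trumpetSet_transfer {X : Type*} [MetricSpace X] (e : X) (δ : ℝ) {x y : X} {k R n : ℕ}
    (h : dist y x ≤ (R : ℝ)) :
    trumpetSet e δ x k n ⊆ trumpetSet e δ y (k + R) n := by
  rintro z ⟨h3, y₀, γ, L, t, hxy₀, hrest⟩
  refine ⟨h3, y₀, γ, L, t, ?_, hrest⟩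
  push_cast
  calc dist y y₀ ≤ dist y x + dist x y₀ := dist_triangle y x y₀
    _ ≤ (R : ℝ) + k := by linarith
    _ = (k : ℝ) + R := by ring

lemma trumpetSet_mono {X : Type*} [MetricSpace X] (e : X) (δ : ℝ) (x : X) {k k' : ℕ} (n : ℕ)
    (h : k ≤ k') : trumpetSet e δ x k n ⊆ trumpetSet e δ x k' n := by
  have := trumpetSet_transfer e δ (x := x) (y := x) (k := k) (R := k' - k) (n := n)
    (by simp [dist_self])
  rwa [Nat.add_sub_cancel' h] at this

/-- The covering lemma: the big trumpet set is in the union of a small ball around `x`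
and boundedly many balls along a fixed geodesic from `e` to `x`. -/
lemma trumpet_cover {X : Type*} [MetricSpace X] {δ : ℝ} (hδ : 0 ≤ δ) {e x : X}
    (hhyp : DRipsHyperbolic X δ)
    (hgeo : ∀ a b : X, ∃ (γ : ℕ → X) (L : ℕ), IsDGeodesic γ a b L)
    {g : ℕ → X} {M : ℕ} (hg : IsDGeodesic g e x M)
    {k n : ℕ} (hk : 4 * k ≤ n) :
    trumpetSet e δ x k n ⊆
      Metric.closedBall x (2 * δ) ∪
        ⋃ s ∈ Finset.Icc (M - (3 * n + Nat.ceil δ)) M, Metric.closedBall (g s) δ := by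
  rintro z ⟨h3, y₀, γ, L, t, hxy₀, hγ, htL, hnt, ht2n, hγt⟩
  obtain ⟨γ₃, L₃, hγ₃⟩ := hgeo y₀ x
  obtain ⟨u, hu, hdu⟩ := hhyp y₀ e x γ g γ₃ L M L₃ hγ hg hγ₃ t htL
  rw [hγt] at hdu
  obtain ⟨hL, hγ0, hγL, hγd⟩ := hγ
  obtain ⟨hM, hg0, hgM, hgd⟩ := hg
  obtain ⟨hL₃, hγ₃0, hγ₃L₃, hγ₃d⟩ := hγ₃
  have hdzy₀ : dist z y₀ = (t : ℝ) := by
    rw [← hγt, ← hγ0]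
    rw [hγd t htL 0 (Nat.zero_le _)]
    simp
  have hdze : dist z e = (L : ℝ) - t := by
    rw [← hγt, ← hγL, hγd t htL L le_rfl]
    rw [abs_of_nonpos (by push_cast [htL]; linarith [(Nat.cast_le (α := ℝ)).2 htL])]
    ring
  rcases hu with ⟨s', hs'M, hgs'⟩ | ⟨t', ht'L₃, hγ₃t'⟩
  · -- on the geodesic from e to x
    right
    have hdue : dist u e = (s' : ℝ) := by
      rw [← hgs', ← hg0, hgd s' hs'M 0 (Nat.zero_le _)]; simp
    have habs : |dist u e - dist z e| ≤ δ := by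
      have h := abs_dist_sub_le u z e
      rw [dist_comm u z] at h
      exact h.trans hdu
    have hLM : |(L : ℝ) - M| ≤ (k : ℝ) := by
      rw [hL, hM]
      have h := abs_dist_sub_le y₀ x e
      rw [dist_comm x e] at h
      exact h.trans (by rwa [dist_comm x y₀] at hxy₀)
    have hkn : (k : ℝ) ≤ n := by exact_mod_cast le_trans (Nat.le_mul_of_pos_left k (by norm_num)) hk
    have hlow : (M : ℝ) - (3 * n + Nat.ceil δ) ≤ s' := by
      have h1 : (s' : ℝ) ≥ (L : ℝ) - t - δ := by
        rw [hdue, hdze] at habs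
        have := abs_le.1 habs
        linarith [this.1]
      have h2 : (L : ℝ) ≥ M - k := by have := abs_le.1 hLM; linarith [this.1]
      have h3 : (t : ℝ) ≤ 2 * n := by exact_mod_cast ht2n
      have h4 : δ ≤ (Nat.ceil δ : ℝ) := Nat.le_ceil δ
      have h5 : (s' : ℝ) ≥ (M : ℝ) - (3 * n + Nat.ceil δ) := by linarith
      linarith
    have hlow' : M - (3 * n + Nat.ceil δ) ≤ s' := by
      have : (M : ℝ) ≤ (s' : ℝ) + (3 * n + Nat.ceil δ) := by linarith
      have hnat : M ≤ s' + (3 * n + Nat.ceil δ) := by exact_mod_cast this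
      omega
    refine Set.mem_biUnion (Finset.mem_Icc.2 ⟨hlow', hs'M⟩) ?_
    rw [Metric.mem_closedBall, hgs']
    exact hdu
  · -- on the short geodesic from y₀ to x : small ball case
    left
    have hdt' : dist u y₀ = (t' : ℝ) := by
      rw [← hγ₃t', ← hγ₃0, hγ₃d t' ht'L₃ 0 (Nat.zero_le _)]; simp
    have hdux : dist u x ≤ (k : ℝ) := by
      rw [← hγ₃t', ← hγ₃L₃, hγ₃d t' ht'L₃ L₃ le_rfl]
      have h1 : (L₃ : ℝ) ≤ k := by rw [hL₃]; rwa [dist_comm] at hxy₀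
      have h2 : (t' : ℝ) ≤ L₃ := by exact_mod_cast ht'L₃
      rw [abs_of_nonpos (by linarith)]
      linarith [(Nat.cast_nonneg (α := ℝ) t')]
    have hduy₀ : dist u y₀ ≤ (k : ℝ) := by
      rw [hdt']
      have : (t' : ℝ) ≤ L₃ := by exact_mod_cast ht'L₃
      have h1 : (L₃ : ℝ) ≤ k := by rw [hL₃]; rwa [dist_comm] at hxy₀
      linarith
    have hnδk : (n : ℝ) ≤ δ + k := by
      have : (t : ℝ) = dist z y₀ := hdzy₀.symm
      have h1 : dist z y₀ ≤ dist z u + dist u y₀ := dist_triangle z u y₀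
      have h2 : (n : ℝ) ≤ t := by exact_mod_cast hnt
      linarith
    have h4k : (4 : ℝ) * k ≤ n := by exact_mod_cast hk
    have hkδ3 : (3 : ℝ) * k ≤ δ := by linarith
    rw [Metric.mem_closedBall]
    calc dist z x ≤ dist z u + dist u x := dist_triangle z u x
      _ ≤ δ + k := by linarith
      _ ≤ 2 * δ := by linarith

lemma indicator_sum_le {X : Type*} [MetricSpace X] (e : X) (δ : ℝ) {x y : X} {R' : ℕ}
    (h : dist y x ≤ (R' : ℝ)) (n K : ℕ) (z : X) :
    ∑ k ∈ Finset.range (K + 1), Set.indicator (trumpetSet e δ x k n) (fun _ => (1 : ℝ)) z ≤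
      (∑ k ∈ Finset.range (K + 1),
        Set.indicator (trumpetSet e δ y k n) (fun _ => (1 : ℝ)) z) + R' := by
  have hnonneg : ∀ (S : Set X), (0:ℝ) ≤ Set.indicator S (fun _ => (1:ℝ)) z :=
    fun S => Set.indicator_nonneg (fun _ _ => zero_le_one) z
  calc ∑ k ∈ Finset.range (K + 1), Set.indicator (trumpetSet e δ x k n) (fun _ => (1:ℝ)) z
      ≤ ∑ k ∈ Finset.range (K + 1),
          Set.indicator (trumpetSet e δ y (k + R') n) (fun _ => (1:ℝ)) z := by
        refine Finset.sum_le_sum fun k _ => ?_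
        exact Set.indicator_le_indicator_apply_of_subset
          (trumpetSet_transfer e δ h) zero_le_one
    _ = ∑ j ∈ Finset.Ico R' (R' + (K + 1)),
          Set.indicator (trumpetSet e δ y j n) (fun _ => (1:ℝ)) z := by
        rw [Finset.sum_Ico_eq_sum_range]
        simp [add_comm, Nat.add_sub_cancel_left]
    _ ≤ ∑ j ∈ Finset.Ico 0 (R' + (K + 1)),
          Set.indicator (trumpetSet e δ y j n) (fun _ => (1:ℝ)) z := by
        refine Finset.sum_le_sum_of_subset_of_nonneg
          (Finset.Ico_subset_Ico (Nat.zero_le _) le_rfl) fun j _ _ => hnonneg _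
    _ = (∑ j ∈ Finset.Ico 0 (K + 1),
          Set.indicator (trumpetSet e δ y j n) (fun _ => (1:ℝ)) z) +
        ∑ j ∈ Finset.Ico (K + 1) (R' + (K + 1)),
          Set.indicator (trumpetSet e δ y j n) (fun _ => (1:ℝ)) z := by
        rw [Finset.sum_Ico_consecutive]
        · exact Nat.zero_le _
        · omega
    _ ≤ (∑ j ∈ Finset.range (K + 1),
          Set.indicator (trumpetSet e δ y j n) (fun _ => (1:ℝ)) z) + R' := by
        rw [Finset.range_eq_Ico]
        refine add_le_add le_rfl ?_
        calc ∑ j ∈ Finset.Ico (K + 1) (R' + (K + 1)),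
              Set.indicator (trumpetSet e δ y j n) (fun _ => (1:ℝ)) z
            ≤ ∑ _j ∈ Finset.Ico (K + 1) (R' + (K + 1)), (1:ℝ) :=
              Finset.sum_le_sum fun j _ => by
                classical
                by_cases hz : z ∈ trumpetSet e δ y j n <;>
                  simp [Set.indicator_of_mem, Set.indicator_of_notMem, hz]
          _ = R' := by
              rw [Finset.sum_const, Nat.card_Ico]
              have hc : R' + (K + 1) - (K + 1) = R' := by omega
              rw [hc, nsmul_eq_mul, mul_one]

lemma trumpetAvg_diff_le {X : Type*} [MetricSpace X] (e : X) (δ : ℝ) {x y : X} {R' : ℕ}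
    (hxy : dist x y ≤ (R' : ℝ)) (n : ℕ) (z : X) :
    |trumpetAvg e δ x n z - trumpetAvg e δ y n z| ≤ (R' : ℝ) / n := by
  have hyx : dist y x ≤ (R' : ℝ) := by rwa [dist_comm]
  have h1 := indicator_sum_le e δ hyx n (n / 4) z
  have h2 := indicator_sum_le e δ hxy n (n / 4) z
  unfold trumpetAvg
  rw [← mul_sub, abs_mul, abs_of_nonneg (by positivity : (0:ℝ) ≤ 1 / (n:ℝ)),
    div_eq_mul_inv ((R':ℝ)) ((n:ℝ)), mul_comm ((R':ℝ)), ← one_div]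
  refine mul_le_mul_of_nonneg_left ?_ (by positivity)
  rw [abs_le]
  constructor <;> linarith

lemma trumpetAvg_eq_zero {X : Type*} [MetricSpace X] (e : X) (δ : ℝ) (x : X) (n : ℕ) {z : X}
    (hz : z ∉ trumpetSet e δ x (n / 4) n) : trumpetAvg e δ x n z = 0 := by
  unfold trumpetAvg
  rw [mul_eq_zero]
  right
  refine Finset.sum_eq_zero fun k hk => ?_
  refine Set.indicator_of_notMem (fun hmem => hz ?_) _
  exact trumpetSet_mono e δ x n (Nat.lt_succ_iff.1 (Finset.mem_range.1 hk)) hmem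

lemma key_bound {X : Type*} [MetricSpace X] {δ : ℝ} (hδ : 0 ≤ δ) (e : X) {p : ℝ} (hp : 1 ≤ p)
    (hgeo : ∀ a b : X, ∃ (γ : ℕ → X) (L : ℕ), IsDGeodesic γ a b L)
    (hhyp : DRipsHyperbolic X δ) {N₁ N₂ : ℕ}
    (hN₁ : ∀ a : X, (Metric.closedBall a δ).Finite ∧ (Metric.closedBall a δ).ncard ≤ N₁)
    (hN₂ : ∀ a : X,
      (Metric.closedBall a (2 * δ)).Finite ∧ (Metric.closedBall a (2 * δ)).ncard ≤ N₂)
    (f : ℕ → ℝ) (hf0 : ∀ n, 0 ≤ f n) (x y : X) {n : ℕ} (hn : 1 ≤ n) :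
    ∑' z : X, |f n / (n : ℝ) ^ (1 / p) * trumpetAvg e δ x n z -
        f n / (n : ℝ) ^ (1 / p) * trumpetAvg e δ y n z| ^ p ≤
      2 * ((N₂ + (Nat.ceil δ + 4) * N₁ : ℕ) : ℝ) * ((Nat.ceil (dist x y) : ℕ) : ℝ) ^ p *
        (f n / n) ^ p := by
  classical
  have hp0 : (0:ℝ) < p := lt_of_lt_of_le one_pos hp
  have hn0 : (0:ℝ) < (n:ℝ) := by exact_mod_cast hn
  set R' : ℕ := Nat.ceil (dist x y) with hR'
  set c : ℝ := f n / (n : ℝ) ^ (1 / p) with hc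
  have hc0 : 0 ≤ c := div_nonneg (hf0 n) (Real.rpow_nonneg (le_of_lt hn0) _)
  set C₀ : ℕ := N₂ + (Nat.ceil δ + 4) * N₁ with hC₀
  -- the support finsets
  have mk : ∀ w : X, ∃ T : Finset X, trumpetSet e δ w (n / 4) n ⊆ ↑T ∧ T.card ≤ C₀ * n := by
    intro w
    obtain ⟨g, M, hg⟩ := hgeo e w
    refine ⟨(hN₂ w).1.toFinset ∪
      (Finset.Icc (M - (3 * n + Nat.ceil δ)) M).biUnion (fun s => (hN₁ (g s)).1.toFinset),
      ?_, ?_⟩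
    · intro z hz
      have := trumpet_cover hδ hhyp hgeo hg (by omega : 4 * (n / 4) ≤ n) hz
      rcases this with hball | hbi
      · simp only [Finset.coe_union, Set.mem_union]
        left
        simpa using (hN₂ w).1.mem_toFinset.2 hball
      · rcases Set.mem_iUnion₂.1 hbi with ⟨s, hs, hzs⟩
        simp only [Finset.coe_union, Set.mem_union]
        right
        simp only [Finset.coe_biUnion, Set.mem_iUnion]
        exact ⟨s, hs, (hN₁ (g s)).1.mem_toFinset.2 hzs⟩
    · calc ((hN₂ w).1.toFinset ∪ _).card ≤ (hN₂ w).1.toFinset.card + _ := Finset.card_union_le _ _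
        _ ≤ N₂ + (Finset.Icc (M - (3 * n + Nat.ceil δ)) M).card * N₁ := by
            refine add_le_add ?_ ?_
            · rw [← Set.ncard_eq_toFinset_card _ (hN₂ w).1]; exact (hN₂ w).2
            · refine le_trans Finset.card_biUnion_le ?_
              refine le_trans (Finset.sum_le_card_nsmul _ _ N₁ fun a _ => ?_)
                (by rw [smul_eq_mul])
              rw [← Set.ncard_eq_toFinset_card _ (hN₁ (g a)).1]
              exact (hN₁ (g a)).2
        _ ≤ C₀ * n := by
            have hcard : (Finset.Icc (M - (3 * n + Nat.ceil δ)) M).card ≤ 3 * n + Nat.ceil δ + 1 := by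
              rw [Nat.card_Icc]; omega
            have : N₂ + (3 * n + Nat.ceil δ + 1) * N₁ ≤ C₀ * n := by
              rw [hC₀]
              have h1 : 3 * n + Nat.ceil δ + 1 ≤ (Nat.ceil δ + 4) * n := by nlinarith
              nlinarith
            exact le_trans (by exact add_le_add le_rfl (Nat.mul_le_mul_right _ hcard)) this
  obtain ⟨Tx, hTx, hTxc⟩ := mk x
  obtain ⟨Ty, hTy, hTyc⟩ := mk y
  set T := Tx ∪ Ty with hT
  have hvanish : ∀ z ∉ T, |c * trumpetAvg e δ x n z - c * trumpetAvg e δ y n z| ^ p = 0 := by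
    intro z hz
    rw [Finset.mem_union] at hz
    push_neg at hz
    have hx0 : trumpetAvg e δ x n z = 0 :=
      trumpetAvg_eq_zero e δ x n (fun hm => hz.1 (hTx hm))
    have hy0 : trumpetAvg e δ y n z = 0 :=
      trumpetAvg_eq_zero e δ y n (fun hm => hz.2 (hTy hm))
    rw [hx0, hy0, mul_zero, sub_zero, abs_zero, Real.zero_rpow (ne_of_gt hp0)]
  have hbound : ∀ z : X, |c * trumpetAvg e δ x n z - c * trumpetAvg e δ y n z| ^ p ≤
      c ^ p * ((R' : ℝ) / n) ^ p := by
    intro z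
    rw [← mul_sub, abs_mul, abs_of_nonneg hc0,
      Real.mul_rpow hc0 (abs_nonneg _)]
    refine mul_le_mul_of_nonneg_left ?_ (Real.rpow_nonneg hc0 _)
    exact Real.rpow_le_rpow (abs_nonneg _)
      (trumpetAvg_diff_le e δ (Nat.le_ceil _) n z) (le_of_lt hp0)
  rw [tsum_eq_sum hvanish]
  calc ∑ z ∈ T, |c * trumpetAvg e δ x n z - c * trumpetAvg e δ y n z| ^ p
      ≤ ∑ _z ∈ T, c ^ p * ((R' : ℝ) / n) ^ p := Finset.sum_le_sum fun z _ => hbound z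
    _ = (T.card : ℝ) * (c ^ p * ((R' : ℝ) / n) ^ p) := by
        rw [Finset.sum_const, nsmul_eq_mul]
    _ ≤ ((2 * (C₀ * n) : ℕ) : ℝ) * (c ^ p * ((R' : ℝ) / n) ^ p) := by
        refine mul_le_mul_of_nonneg_right ?_ (by positivity)
        have h2 : Tx.card + Ty.card ≤ 2 * (C₀ * n) := by
          rw [two_mul]; exact add_le_add hTxc hTyc
        exact_mod_cast le_trans (Finset.card_union_le _ _) h2
    _ = 2 * (C₀ : ℝ) * ((R' : ℝ)) ^ p * (f n / n) ^ p := by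
        have hcp : c ^ p = (f n) ^ p / (n : ℝ) := by
          rw [hc, Real.div_rpow (hf0 n) (Real.rpow_nonneg (le_of_lt hn0) _),
            ← Real.rpow_mul (le_of_lt hn0), one_div_mul_cancel (ne_of_gt hp0), Real.rpow_one]
        have hnp : ((n : ℝ)) ^ p ≠ 0 := ne_of_gt (Real.rpow_pos_of_pos hn0 p)
        rw [hcp, Real.div_rpow (Nat.cast_nonneg R') (le_of_lt hn0),
          Real.div_rpow (hf0 n) (le_of_lt hn0)]
        push_cast
        field_simp

lemma block_bound {p : ℝ} (hp : 1 ≤ p) (f : ℕ → ℝ) (hf0 : ∀ n, 0 ≤ f n) (hmono : Monotone f)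
    (m : ℕ) :
    (f (2 ^ (m + 1)) / ((2 ^ (m + 1) : ℕ) : ℝ)) ^ p ≤
      (2 : ℝ) ^ (p + 1) * ∑ i ∈ Finset.Ico ((2 : ℕ) ^ (m + 1)) ((2 : ℕ) ^ (m + 2)),
        (1 / ((i : ℝ) + 1)) * (f (i + 1) / ((i : ℝ) + 1)) ^ p := by
  have hp0 : (0:ℝ) < p := lt_of_lt_of_le one_pos hp
  set n : ℕ := 2 ^ (m + 1) with hn
  have hn1 : 1 ≤ n := Nat.one_le_two_pow
  have hn0 : (0:ℝ) < (n:ℝ) := by exact_mod_cast hn1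
  have h2n : (2:ℕ) ^ (m + 2) = 2 * n := by rw [hn]; ring
  have hterm : ∀ i ∈ Finset.Ico n (2 ^ (m + 2)),
      (1 / (2 * (n:ℝ))) * (f n / (2 * (n:ℝ))) ^ p ≤
        (1 / ((i : ℝ) + 1)) * (f (i + 1) / ((i : ℝ) + 1)) ^ p := by
    intro i hi
    rw [Finset.mem_Ico, h2n] at hi
    have hi1 : (n:ℝ) ≤ i := by exact_mod_cast hi.1
    have hi2 : (i:ℝ) + 1 ≤ 2 * n := by
      have : i + 1 ≤ 2 * n := hi.2
      exact_mod_cast this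
    have hipos : (0:ℝ) < (i:ℝ) + 1 := by positivity
    refine mul_le_mul ?_ ?_
      (Real.rpow_nonneg (div_nonneg (hf0 n) (by positivity)) _) (by positivity)
    · rw [div_le_div_iff₀ (by positivity) hipos]
      linarith
    · refine Real.rpow_le_rpow (div_nonneg (hf0 n) (by positivity)) ?_ (le_of_lt hp0)
      rw [div_le_div_iff₀ (by positivity) hipos]
      have hfi : f n ≤ f (i + 1) := hmono (by omega)
      nlinarith [hf0 n, hf0 (i+1)]
  have hsum : (Finset.Ico n (2 ^ (m + 2))).card •
      ((1 / (2 * (n:ℝ))) * (f n / (2 * (n:ℝ))) ^ p) ≤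
      ∑ i ∈ Finset.Ico n (2 ^ (m + 2)), (1 / ((i : ℝ) + 1)) * (f (i + 1) / ((i : ℝ) + 1)) ^ p :=
    Finset.card_nsmul_le_sum _ _ _ hterm
  have hcard2 : (Finset.Ico n ((2:ℕ) ^ (m + 2))).card = n := by
    rw [Nat.card_Ico, h2n]; omega
  rw [hcard2, nsmul_eq_mul] at hsum
  have hEq : (f n / ((n:ℕ) : ℝ)) ^ p =
      (2 : ℝ) ^ (p + 1) * ((n:ℝ) * ((1 / (2 * (n:ℝ))) * (f n / (2 * (n:ℝ))) ^ p)) := by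
    have h2p : (0:ℝ) < (2:ℝ) ^ p := Real.rpow_pos_of_pos two_pos p
    rw [Real.div_rpow (hf0 n) (le_of_lt hn0),
      Real.div_rpow (hf0 n) (by positivity : (0:ℝ) ≤ 2 * (n:ℝ)),
      Real.mul_rpow (by norm_num : (0:ℝ) ≤ 2) (le_of_lt hn0),
      Real.rpow_add two_pos p 1, Real.rpow_one]
    have hnp : (0:ℝ) < (n:ℝ) ^ p := Real.rpow_pos_of_pos hn0 p
    field_simp
  rw [hEq]
  refine mul_le_mul_of_nonneg_left ?_ (Real.rpow_nonneg (by norm_num) _)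
  exact hsum

lemma sum_blocks_le (a : ℕ → ℝ) (ha0 : ∀ i, 0 ≤ a i) (ha : Summable a) (M : ℕ) :
    ∑ m ∈ Finset.range M, ∑ i ∈ Finset.Ico ((2:ℕ) ^ (m + 1)) ((2:ℕ) ^ (m + 2)), a i ≤
      ∑' i, a i := by
  classical
  have hdisj : (↑(Finset.range M) : Set ℕ).PairwiseDisjoint
      (fun m => Finset.Ico ((2:ℕ) ^ (m + 1)) ((2:ℕ) ^ (m + 2))) := by
    intro m _ m' _ hne
    refine Finset.disjoint_left.2 fun i hi hi' => ?_
    rw [Finset.mem_Ico] at hi hi'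
    rcases Nat.lt_or_ge m m' with h | h
    · have : (2:ℕ) ^ (m + 2) ≤ 2 ^ (m' + 1) := Nat.pow_le_pow_right (by norm_num) (by omega)
      omega
    · have hlt : m' < m := lt_of_le_of_ne h (Ne.symm hne)
      have : (2:ℕ) ^ (m' + 2) ≤ 2 ^ (m + 1) := Nat.pow_le_pow_right (by norm_num) (by omega)
      omega
  rw [← Finset.sum_biUnion hdisj]
  exact Summable.sum_le_tsum _ (fun i _ => ha0 i) ha

/-- Theorem 3.2 (Lipschitz part): for a uniformly discrete δ-hyperbolic graph of bounded
geometry, `p ≥ 1`, and a concave non-decreasing `f` with property (C_p), the map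
`φ(x) = ∑_{n ≥ 1} (f(2^n)/2^{n/p}) H(x,2^n)` is Lipschitz (at large scale):
`‖φ(x) - φ(y)‖_p ≤ L d(x,y) + L`. -/
theorem stmt14 {X : Type*} [MetricSpace X] (δ : ℝ) (hδ : 0 ≤ δ) (e : X) (p : ℝ) (hp : 1 ≤ p)
    (hdiscrete : ∀ a b : X, a ≠ b → 1 ≤ dist a b)
    (hgeodesic : ∀ a b : X, ∃ (γ : ℕ → X) (L : ℕ), IsDGeodesic γ a b L)
    (hbddgeom : ∀ r : ℝ, ∃ N : ℕ, ∀ a : X,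
      (Metric.closedBall a r).Finite ∧ (Metric.closedBall a r).ncard ≤ N)
    (hhyp : DRipsHyperbolic X δ)
    (f : ℕ → ℝ) (hf0 : ∀ n, 0 ≤ f n) (hmono : Monotone f)
    (hconc : ∀ m n : ℕ, m ≤ n → f (n + m) - f n ≤ f n - f (n - m))
    (hCp : Summable (fun n : ℕ => (1 / ((n : ℝ) + 1)) * (f (n + 1) / ((n : ℝ) + 1)) ^ p)) :
    ∃ L : ℝ, 0 < L ∧ ∀ x y : X,
      (∑' (m : ℕ) (z : X),
          |trumpetEmbedding e δ p f x m z - trumpetEmbedding e δ p f y m z| ^ p) ^ (1 / p)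
        ≤ L * dist x y + L := by
  classical
  have hp0 : (0:ℝ) < p := lt_of_lt_of_le one_pos hp
  obtain ⟨N₁, hN₁⟩ := hbddgeom δ
  obtain ⟨N₂, hN₂⟩ := hbddgeom (2 * δ)
  set a : ℕ → ℝ := fun i => (1 / ((i : ℝ) + 1)) * (f (i + 1) / ((i : ℝ) + 1)) ^ p with ha
  have ha0 : ∀ i, 0 ≤ a i := fun i =>
    mul_nonneg (by positivity) (Real.rpow_nonneg (div_nonneg (hf0 _) (by positivity)) _)
  set b : ℕ → ℝ := fun m => (f (2 ^ (m + 1)) / ((2 ^ (m + 1) : ℕ) : ℝ)) ^ p with hb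
  have hb0 : ∀ m, 0 ≤ b m := fun m => Real.rpow_nonneg
    (div_nonneg (hf0 _) (Nat.cast_nonneg _)) _
  have hpartial : ∀ M : ℕ, ∑ m ∈ Finset.range M, b m ≤ (2:ℝ) ^ (p + 1) * ∑' i, a i := by
    intro M
    calc ∑ m ∈ Finset.range M, b m
        ≤ ∑ m ∈ Finset.range M, (2:ℝ) ^ (p + 1) *
            ∑ i ∈ Finset.Ico ((2:ℕ) ^ (m + 1)) ((2:ℕ) ^ (m + 2)), a i :=
          Finset.sum_le_sum fun m _ => block_bound hp f hf0 hmono m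
      _ = (2:ℝ) ^ (p + 1) * ∑ m ∈ Finset.range M,
            ∑ i ∈ Finset.Ico ((2:ℕ) ^ (m + 1)) ((2:ℕ) ^ (m + 2)), a i := by
          rw [Finset.mul_sum]
      _ ≤ (2:ℝ) ^ (p + 1) * ∑' i, a i := by
          refine mul_le_mul_of_nonneg_left (sum_blocks_le a ha0 hCp M) ?_
          exact Real.rpow_nonneg (by norm_num) _
  have hbsum : Summable b := summable_of_sum_range_le hb0 hpartial
  set Sb : ℝ := ∑' m, b m with hSb
  have hSb0 : 0 ≤ Sb := tsum_nonneg hb0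
  set C₀ : ℕ := N₂ + (Nat.ceil δ + 4) * N₁ with hC₀
  set A : ℝ := 2 * (C₀ : ℝ) * Sb with hA
  have hA0 : 0 ≤ A := by positivity
  refine ⟨A ^ (1 / p) + 1, by positivity, fun x y => ?_⟩
  set R' : ℕ := Nat.ceil (dist x y) with hR'
  set F : ℕ → ℝ := fun m => ∑' z : X,
    |trumpetEmbedding e δ p f x m z - trumpetEmbedding e δ p f y m z| ^ p with hF
  have hF0 : ∀ m, 0 ≤ F m := fun m =>
    tsum_nonneg fun z => Real.rpow_nonneg (abs_nonneg _) _
  have hkey : ∀ m, F m ≤ 2 * (C₀ : ℝ) * ((R' : ℝ)) ^ p * b m := by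
    intro m
    have hcast : ((2 : ℝ)) ^ (m + 1) = (((2 : ℕ) ^ (m + 1) : ℕ) : ℝ) := by push_cast; ring
    have := key_bound hδ e hp hgeodesic hhyp hN₁ hN₂ f hf0 x y
      (Nat.one_le_two_pow : 1 ≤ 2 ^ (m + 1))
    rw [hF]
    simp only [trumpetEmbedding]
    calc (∑' z : X, |f (2 ^ (m + 1)) / ((2:ℝ) ^ (m + 1)) ^ (1 / p) *
            trumpetAvg e δ x (2 ^ (m + 1)) z -
          f (2 ^ (m + 1)) / ((2:ℝ) ^ (m + 1)) ^ (1 / p) *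
            trumpetAvg e δ y (2 ^ (m + 1)) z| ^ p)
        = ∑' z : X, |f (2 ^ (m + 1)) / (((2 ^ (m + 1) : ℕ) : ℝ)) ^ (1 / p) *
            trumpetAvg e δ x (2 ^ (m + 1)) z -
          f (2 ^ (m + 1)) / (((2 ^ (m + 1) : ℕ) : ℝ)) ^ (1 / p) *
            trumpetAvg e δ y (2 ^ (m + 1)) z| ^ p := by rw [hcast]
      _ ≤ 2 * ((N₂ + (Nat.ceil δ + 4) * N₁ : ℕ) : ℝ) * ((R' : ℕ) : ℝ) ^ p *
            (f (2 ^ (m + 1)) / ((2 ^ (m + 1) : ℕ) : ℝ)) ^ p := this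
      _ = 2 * (C₀ : ℝ) * ((R' : ℝ)) ^ p * b m := by rw [hC₀, hb]
  have hgsum : Summable (fun m => 2 * (C₀ : ℝ) * ((R' : ℝ)) ^ p * b m) := hbsum.mul_left _
  have hFsum : Summable F := Summable.of_nonneg_of_le hF0 hkey hgsum
  have hS : ∑' m, F m ≤ A * ((R' : ℝ)) ^ p := by
    calc ∑' m, F m ≤ ∑' m, 2 * (C₀ : ℝ) * ((R' : ℝ)) ^ p * b m :=
          hFsum.tsum_le_tsum hkey hgsum
      _ = 2 * (C₀ : ℝ) * ((R' : ℝ)) ^ p * Sb := tsum_mul_left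
      _ = A * ((R' : ℝ)) ^ p := by rw [hA]; ring
  have hfinal : (∑' m, F m) ^ (1 / p) ≤ A ^ (1 / p) * (R' : ℝ) := by
    calc (∑' m, F m) ^ (1 / p) ≤ (A * ((R' : ℝ)) ^ p) ^ (1 / p) :=
          Real.rpow_le_rpow (tsum_nonneg hF0) hS (by positivity)
      _ = A ^ (1 / p) * (((R' : ℝ)) ^ p) ^ (1 / p) :=
          Real.mul_rpow hA0 (Real.rpow_nonneg (Nat.cast_nonneg _) _)
      _ = A ^ (1 / p) * (R' : ℝ) := by
          rw [← Real.rpow_mul (Nat.cast_nonneg _), mul_one_div_cancel (ne_of_gt hp0),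
            Real.rpow_one]
  refine le_trans hfinal ?_
  have hceil : ((R' : ℕ) : ℝ) ≤ dist x y + 1 :=
    le_of_lt (Nat.ceil_lt_add_one dist_nonneg)
  have hA1p : 0 ≤ A ^ (1 / p) := Real.rpow_nonneg hA0 _
  nlinarith [dist_nonneg (x := x) (y := y), mul_le_mul_of_nonneg_left hceil hA1p]
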